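/- Let n ≥ 1, let B_0, …, B_n and U be types, let h_i : B_i → U be injective for each 0 ≤ i ≤ n, and let R_i ⊆ B_{i-1} × B_i for each 1 ≤ i ≤ n. Define P_i = {(h_{i-1}(a), h_i(b)) | (a,b) ∈ R_i} ⊆ U × U. Call a tuple (o_1,…,o_n) ∈ U^n a path from u ∈ U if (u,o_1) ∈ P_1 and (o_{j-1},o_j) ∈ P_j for all 2 ≤ j ≤ n. Then every u ∈ U has at most one path in (P_1,…,P_n) if and only if the chain relation C = {(a,(b_1,…,b_n)) | (a,b_1) ∈ R_1 and (b_{j-1},b_j) ∈ R_j for all 2 ≤ j ≤ n} ⊆ B_0 × (B_1 × … × B_n) is functional, i.e. (a,b) ∈ C and (a,b') ∈ C imply b = b'. -/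

import Mathlib

def VFDPathSeq {U : Type*} {n : ℕ} (u : U) (o : Fin n → U) : Fin (n + 1) → U :=
  Fin.cases u o

def VFDChainSeq {n : ℕ} {B : Fin (n + 1) → Type*} (a : B 0) (b : ∀ i : Fin n, B i.succ) :
    ∀ i : Fin (n + 1), B i :=
  Fin.cases a b

section lemmas
variable {n : ℕ} {U : Type*} {B : Fin (n + 1) → Type*}

lemma VFDPathSeq_succ (u : U) (o : Fin n → U) (i : Fin n) :
    VFDPathSeq u o i.succ = o i := by simp [VFDPathSeq]

lemma VFDChainSeq_succ (a : B 0) (b : ∀ i : Fin n, B i.succ) (i : Fin n) :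
    VFDChainSeq a b i.succ = b i := by simp [VFDChainSeq]

lemma VFDChainSeq_castSucc_zero (a : B 0) (b : ∀ i : Fin n, B i.succ) (hk : 0 < n) :
    VFDChainSeq a b (Fin.castSucc (⟨0, hk⟩ : Fin n)) = a := by
  show VFDChainSeq a b 0 = a
  simp [VFDChainSeq]

lemma VFDChainSeq_castSucc_succ (a : B 0) (b : ∀ i : Fin n, B i.succ) (k : ℕ) (hk : k + 1 < n) :
    VFDChainSeq a b (Fin.castSucc (⟨k+1, hk⟩ : Fin n)) = b ⟨k, Nat.lt_of_succ_lt hk⟩ := by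
  show VFDChainSeq a b (Fin.succ ⟨k, Nat.lt_of_succ_lt hk⟩) = b ⟨k, Nat.lt_of_succ_lt hk⟩
  simp [VFDChainSeq]

lemma VFDPathSeq_castSucc_zero (u : U) (o : Fin n → U) (hk : 0 < n) :
    VFDPathSeq u o (Fin.castSucc (⟨0, hk⟩ : Fin n)) = u := by
  show VFDPathSeq u o 0 = u
  simp [VFDPathSeq]

lemma VFDPathSeq_castSucc_succ (u : U) (o : Fin n → U) (k : ℕ) (hk : k + 1 < n) :
    VFDPathSeq u o (Fin.castSucc (⟨k+1, hk⟩ : Fin n)) = o ⟨k, Nat.lt_of_succ_lt hk⟩ := by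
  show VFDPathSeq u o (Fin.succ ⟨k, Nat.lt_of_succ_lt hk⟩) = o ⟨k, Nat.lt_of_succ_lt hk⟩
  simp [VFDPathSeq]

lemma seq_compat (h : ∀ i, B i → U) (a : B 0) (b : ∀ i : Fin n, B i.succ)
    (j : Fin (n + 1)) :
    VFDPathSeq (h 0 a) (fun i => h i.succ (b i)) j = h j (VFDChainSeq a b j) := by
  induction j using Fin.cases with
  | zero => simp [VFDPathSeq, VFDChainSeq]
  | succ j => simp [VFDPathSeq, VFDChainSeq]

end lemmas

theorem path_vfd_detection
    (n : ℕ) (hn : 1 ≤ n) {U : Type*} (B : Fin (n + 1) → Type*)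
    (h : ∀ i, B i → U) (hinj : ∀ i, Function.Injective (h i))
    (R : ∀ i : Fin n, Set (B i.castSucc × B i.succ)) :
    (∀ (u : U) (o o' : Fin n → U),
        (∀ i : Fin n, (VFDPathSeq u o i.castSucc, VFDPathSeq u o i.succ) ∈
            (fun q : B i.castSucc × B i.succ => (h i.castSucc q.1, h i.succ q.2)) '' R i) →
        (∀ i : Fin n, (VFDPathSeq u o' i.castSucc, VFDPathSeq u o' i.succ) ∈
            (fun q : B i.castSucc × B i.succ => (h i.castSucc q.1, h i.succ q.2)) '' R i) →
        o = o')
    ↔ (∀ (a : B 0) (b b' : ∀ i : Fin n, B i.succ),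
        (∀ i : Fin n, (VFDChainSeq a b i.castSucc, VFDChainSeq a b i.succ) ∈ R i) →
        (∀ i : Fin n, (VFDChainSeq a b' i.castSucc, VFDChainSeq a b' i.succ) ∈ R i) →
        b = b') := by
  constructor
  · intro hP a b b' hc hc'
    have key := hP (h 0 a) (fun i => h i.succ (b i)) (fun i => h i.succ (b' i))
      (fun i => ⟨(VFDChainSeq a b i.castSucc, VFDChainSeq a b i.succ), hc i,
        by rw [seq_compat h a b, seq_compat h a b]⟩)
      (fun i => ⟨(VFDChainSeq a b' i.castSucc, VFDChainSeq a b' i.succ), hc' i,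
        by rw [seq_compat h a b', seq_compat h a b']⟩)
    funext i
    exact hinj i.succ (congrFun key i)
  · intro hC u o o' hp hp'
    have hzero : 0 < n := hn
    have build : ∀ o : Fin n → U,
        (∀ i : Fin n, (VFDPathSeq u o i.castSucc, VFDPathSeq u o i.succ) ∈
            (fun q : B i.castSucc × B i.succ => (h i.castSucc q.1, h i.succ q.2)) '' R i) →
        ∃ (a : B 0) (b : ∀ i : Fin n, B i.succ),
          (∀ i : Fin n, (VFDChainSeq a b i.castSucc, VFDChainSeq a b i.succ) ∈ R i) ∧
          h 0 a = u ∧ ∀ i : Fin n, h i.succ (b i) = o i := by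
      intro o hp
      choose w hw hw1 using fun i => (hp i : ∃ q ∈ R i, _)
      have hw1' : ∀ i : Fin n, h i.castSucc (w i).1 = VFDPathSeq u o i.castSucc ∧
          h i.succ (w i).2 = VFDPathSeq u o i.succ := by
        intro i
        exact ⟨congrArg Prod.fst (hw1 i), congrArg Prod.snd (hw1 i)⟩
      refine ⟨(w ⟨0, hzero⟩).1, fun i => (w i).2, ?_, ?_, ?_⟩
      · intro i
        obtain ⟨k, hk⟩ := i
        match k, hk with
        | 0, hk =>
          rw [VFDChainSeq_castSucc_zero (w ⟨0, hzero⟩).1 (fun i => (w i).2) hk, VFDChainSeq_succ (w ⟨0, hzero⟩).1 (fun i => (w i).2)]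
          exact hw ⟨0, hzero⟩
        | k + 1, hk =>
          rw [VFDChainSeq_castSucc_succ (w ⟨0, hzero⟩).1 (fun i => (w i).2) k hk, VFDChainSeq_succ (w ⟨0, hzero⟩).1 (fun i => (w i).2)]
          have hglue : (w (⟨k, Nat.lt_of_succ_lt hk⟩ : Fin n)).2 = (w ⟨k+1, hk⟩).1 := by
            apply hinj (Fin.succ (⟨k, Nat.lt_of_succ_lt hk⟩ : Fin n))
            rw [(hw1' ⟨k, Nat.lt_of_succ_lt hk⟩).2, VFDPathSeq_succ]
            have h2 := (hw1' ⟨k+1, hk⟩).1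
            rw [VFDPathSeq_castSucc_succ _ _ k hk] at h2
            exact h2.symm
          rw [hglue]
          exact hw ⟨k+1, hk⟩
      · have h2 := (hw1' ⟨0, hzero⟩).1
        rwa [VFDPathSeq_castSucc_zero _ _ hzero] at h2
      · intro i
        have h2 := (hw1' i).2
        rwa [VFDPathSeq_succ] at h2
    obtain ⟨a, b, hcb, hau, hbo⟩ := build o hp
    obtain ⟨a', b', hcb', hau', hbo'⟩ := build o' hp'
    have haa : a = a' := hinj 0 (hau.trans hau'.symm)
    subst haa
    have hbb := hC a b b' hcb hcb'
    funext i
    rw [← hbo i, ← hbo' i, hbb]
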